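/- Let k be a field, fix M ≥ 1 and N ≥ 0, set R' := k[γ_1, …, γ_M, β_1, …, β_N] and K := max(N+1, M), and let α_n := h_n(γ/β). Then the quotient A := R'[x] / rad(B_α) of the polynomial ring R'[x] by the radical of the Hankel pairing B_α is a free R'-module of rank K, with basis the images of the monomials 1, x, …, x^{K−1}. -/

import Mathlib

open MvPolynomial Finset

/-- The Hankel pairing associated to a sequence `α`:
`B_α(xᵃ, xᵇ) = α_{a+b}`, i.e. `B_α(f,g) = ∑ₙ (fg)ₙ αₙ`. -/
noncomputable def hankelPair {R : Type*} [CommRing R] (α : ℕ → R) (f g : Polynomial R) : R :=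
  (f * g).sum fun n c => c * α n

/-- The radical of the Hankel pairing `B_α`, as an ideal of `R[x]`. -/
noncomputable def hankelRadical {R : Type*} [CommRing R] (α : ℕ → R) : Ideal (Polynomial R) where
  carrier := {f | ∀ g, hankelPair α f g = 0}
  zero_mem' := by
    intro g
    simp [hankelPair]
  add_mem' := by
    intro a b ha hb g
    have h : (a + b) * g = a * g + b * g := add_mul a b g
    simp only [hankelPair, Set.mem_setOf_eq] at ha hb ⊢
    rw [h, Polynomial.sum_add_index (a * g) (b * g) _ (fun i => by simp)
      (fun i b₁ b₂ => by ring), ha g, hb g, add_zero]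
  smul_mem' := by
    intro c f hf g
    simp only [hankelPair, smul_eq_mul, Set.mem_setOf_eq] at hf ⊢
    have h : c * f * g = f * (c * g) := by ring
    rw [h]
    exact hf (c * g)

/-- The supersymmetric complete function
`h_n(γ/β) = ∑_{l=0}^{min(n,N)} h_{n−l}(γ) e_l(β)` with coefficients in a field `k`. -/
noncomputable def hSusy (k : Type*) [Field k] (M N : ℕ) (n : ℕ) :
    MvPolynomial (Fin M ⊕ Fin N) k :=
  ∑ l ∈ Finset.range (min n N + 1),
    rename Sum.inl (hsymm (Fin M) k (n - l)) * rename Sum.inr (esymm (Fin N) k l)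

/-! ### Auxiliary lemmas -/

set_option linter.unusedSectionVars false

section GF

variable {A : Type*} [CommRing A]

lemma hankelAux_geom_inv (a : A) :
    (1 - PowerSeries.C a * PowerSeries.X) * PowerSeries.mk (fun m => a ^ m) = 1 := by
  ext n
  rw [sub_mul, one_mul, map_sub]
  cases n with
  | zero => simp
  | succ n =>
    rw [mul_assoc, PowerSeries.coeff_C_mul, PowerSeries.coeff_succ_X_mul]
    simp [pow_succ, mul_comm]

variable {σ : Type*} [Fintype σ] [DecidableEq σ]

lemma hankelAux_prod_count_eq {n : ℕ} (s : Sym σ n) :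
    (∏ i : σ, (MvPolynomial.X i : MvPolynomial σ A) ^ (s : Multiset σ).count i)
      = ((s : Multiset σ).map MvPolynomial.X).prod := by
  rw [Finset.prod_multiset_map_count]
  refine (Finset.prod_subset (subset_univ _) ?_).symm
  intro x _ hx
  rw [Multiset.count_eq_zero_of_notMem (by simpa using hx), pow_zero]

lemma hankelAux_card_toMultiset_of_mem {n : ℕ} {l : σ →₀ ℕ}
    (hl : l ∈ finsuppAntidiag (univ : Finset σ) n) :
    Multiset.card (Finsupp.toMultiset l) = n := by
  rw [mem_finsuppAntidiag] at hl
  rw [Finsupp.card_toMultiset, Finsupp.sum_fintype _ _ fun _ => rfl, ← hl.1]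
  rfl

lemma hankelAux_mk_hsymm_eq :
    PowerSeries.mk (fun n => (hsymm σ A n : MvPolynomial σ A)) =
      ∏ i : σ, PowerSeries.mk (fun m => (MvPolynomial.X i : MvPolynomial σ A) ^ m) := by
  ext n
  rw [PowerSeries.coeff_mk, PowerSeries.coeff_prod, hsymm]
  simp only [PowerSeries.coeff_mk]
  congr 1
  refine Finset.sum_bij' (s := (univ : Finset (Sym σ n)))
    (t := finsuppAntidiag (univ : Finset σ) n)
    (f := fun s => ((s : Multiset σ).map MvPolynomial.X).prod)
    (g := fun l => ∏ i : σ, (MvPolynomial.X i : MvPolynomial σ A) ^ l i)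
    (i := fun (s : Sym σ n) _ => Multiset.toFinsupp (s : Multiset σ))
    (j := fun l hl => (⟨Finsupp.toMultiset l, hankelAux_card_toMultiset_of_mem hl⟩ : Sym σ n))
    ?_ ?_ ?_ ?_ ?_
  · intro s _
    rw [mem_finsuppAntidiag]
    refine ⟨?_, subset_univ _⟩
    have h2 : (Multiset.toFinsupp (s : Multiset σ)).sum (fun _ m => m) = n := by
      have := Finsupp.card_toMultiset (Multiset.toFinsupp (s : Multiset σ))
      rw [Multiset.toFinsupp_toMultiset] at this
      exact this.symm.trans s.2
    show univ.sum (Multiset.toFinsupp (s : Multiset σ)) = n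
    exact (Finsupp.sum_fintype _ _ fun _ => rfl).symm.trans h2
  · intro l hl; exact mem_univ _
  · intro s _; simp [Sym.ext_iff]; rfl
  · intro l hl; simp
  · intro s _
    show ((s : Multiset σ).map MvPolynomial.X).prod = _
    rw [← hankelAux_prod_count_eq (A := A) s]
    refine Finset.prod_congr rfl fun i _ => ?_
    simp

lemma hankelAux_natDegree_X_add_C_le (c : A) : (Polynomial.X + Polynomial.C c).natDegree ≤ 1 :=
  (Polynomial.natDegree_add_le _ _).trans
    (by simp [Polynomial.natDegree_X_le])

lemma hankelAux_natDegree_one_add_C_mul_X_le (c : A) :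
    ((1 : Polynomial A) + Polynomial.C c * Polynomial.X).natDegree ≤ 1 :=
  (Polynomial.natDegree_add_le _ _).trans (by
    simp only [Polynomial.natDegree_one, max_le_iff]
    exact ⟨Nat.zero_le _, (Polynomial.natDegree_mul_le).trans (by
      simp [Polynomial.natDegree_X_le])⟩)

lemma hankelAux_natDegree_one_sub_C_mul_X_le (c : A) :
    ((1 : Polynomial A) - Polynomial.C c * Polynomial.X).natDegree ≤ 1 :=
  (Polynomial.natDegree_sub_le _ _).trans (by
    simp only [Polynomial.natDegree_one, max_le_iff]
    exact ⟨Nat.zero_le _, (Polynomial.natDegree_mul_le).trans (by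
      simp [Polynomial.natDegree_X_le])⟩)

variable {ι : Type*}

lemma hankelAux_natDegree_prod_linear_le (s : Finset ι) (r : ι → A) :
    (∏ i ∈ s, (Polynomial.X + Polynomial.C (r i))).natDegree ≤ s.card := by
  refine (Polynomial.natDegree_prod_le _ _).trans ?_
  exact (Finset.sum_le_card_nsmul _ _ 1 fun i _ => hankelAux_natDegree_X_add_C_le (r i)).trans
    (by simp)

lemma hankelAux_natDegree_prod_one_add_le (s : Finset ι) (r : ι → A) :
    (∏ i ∈ s, ((1 : Polynomial A) + Polynomial.C (r i) * Polynomial.X)).natDegree ≤ s.card := by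
  refine (Polynomial.natDegree_prod_le _ _).trans ?_
  exact (Finset.sum_le_card_nsmul _ _ 1
    fun i _ => hankelAux_natDegree_one_add_C_mul_X_le (r i)).trans (by simp)

lemma hankelAux_natDegree_prod_one_sub_le (s : Finset ι) (r : ι → A) :
    (∏ i ∈ s, ((1 : Polynomial A) - Polynomial.C (r i) * Polynomial.X)).natDegree ≤ s.card := by
  refine (Polynomial.natDegree_prod_le _ _).trans ?_
  exact (Finset.sum_le_card_nsmul _ _ 1
    fun i _ => hankelAux_natDegree_one_sub_C_mul_X_le (r i)).trans (by simp)

lemma hankelAux_prod_reflect (s : Finset ι) (r : ι → A) :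
    (∏ i ∈ s, (Polynomial.X + Polynomial.C (r i))).reflect s.card
      = ∏ i ∈ s, (1 + Polynomial.C (r i) * Polynomial.X) := by
  classical
  induction s using Finset.cons_induction with
  | empty => simp [Polynomial.reflect_one]
  | cons a s ha ih =>
    rw [Finset.prod_cons, Finset.card_cons, Finset.prod_cons, ← ih]
    rw [show s.card + 1 = 1 + s.card by ring]
    rw [Polynomial.reflect_mul _ _ (hankelAux_natDegree_X_add_C_le (r a))
      (hankelAux_natDegree_prod_linear_le s r)]
    congr 1
    rw [Polynomial.reflect_add, Polynomial.reflect_one_X, Polynomial.reflect_C]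
    simp

lemma hankelAux_coe_prod_one_add_X :
    ((∏ i : σ, (1 + Polynomial.C (MvPolynomial.X i) * Polynomial.X)
        : Polynomial (MvPolynomial σ A)) : PowerSeries (MvPolynomial σ A))
      = PowerSeries.mk fun l => esymm σ A l := by
  refine PowerSeries.ext fun l => ?_
  rw [Polynomial.coeff_coe, PowerSeries.coeff_mk]
  rcases le_or_gt l (Fintype.card σ) with h | h
  · have hcard : (univ : Finset σ).card = Fintype.card σ := Finset.card_univ
    rw [← hankelAux_prod_reflect (univ : Finset σ) MvPolynomial.X, Polynomial.coeff_reflect]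
    rw [Polynomial.revAt_le (by omega)]
    have h2 : (univ : Finset σ).card - l ≤ Fintype.card σ := by omega
    have h3 := MvPolynomial.prod_X_add_C_coeff A σ (k := (univ : Finset σ).card - l) h2
    rw [show (∏ i ∈ (univ : Finset σ), (Polynomial.X + Polynomial.C (MvPolynomial.X i)))
      = (∏ i : σ, (Polynomial.X + Polynomial.C (MvPolynomial.X i))) from rfl, h3]
    congr 1
    omega
  · rw [Polynomial.coeff_eq_zero_of_natDegree_lt
      (lt_of_le_of_lt ((hankelAux_natDegree_prod_one_add_le _ _).trans (by simp)) h)]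
    rw [esymm, Finset.powersetCard_eq_empty.mpr (by simp [h]), Finset.sum_empty]

lemma hankelAux_prod_one_sub_mul_hsymm :
    ((∏ i : σ, (1 - Polynomial.C (MvPolynomial.X i) * Polynomial.X)
       : Polynomial (MvPolynomial σ A)) : PowerSeries (MvPolynomial σ A))
      * PowerSeries.mk (fun n => hsymm σ A n) = 1 := by
  rw [hankelAux_mk_hsymm_eq, show ((∏ i : σ, (1 - Polynomial.C (MvPolynomial.X i) * Polynomial.X)
       : Polynomial (MvPolynomial σ A)) : PowerSeries (MvPolynomial σ A))
      = ∏ i : σ, ((1 - Polynomial.C (MvPolynomial.X i) * Polynomial.X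
        : Polynomial (MvPolynomial σ A)) : PowerSeries (MvPolynomial σ A)) from
      map_prod Polynomial.coeToPowerSeries.ringHom _ _, ← Finset.prod_mul_distrib]
  refine Finset.prod_eq_one fun i _ => ?_
  rw [show ((1 - Polynomial.C (MvPolynomial.X i) * Polynomial.X
        : Polynomial (MvPolynomial σ A)) : PowerSeries (MvPolynomial σ A))
      = 1 - PowerSeries.C (MvPolynomial.X i) * PowerSeries.X by push_cast; ring]
  exact hankelAux_geom_inv _

lemma hankelAux_esymm_zero_of_gt {l : ℕ} (h : Fintype.card σ < l) : esymm σ A l = 0 := by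
  rw [esymm, Finset.powersetCard_eq_empty.mpr (by simp [h]), Finset.sum_empty]

end GF

section lam

variable {R : Type*} [CommRing R]

noncomputable def hankelLam (α : ℕ → R) (p : Polynomial R) : R := p.sum fun n c => c * α n

lemma hankelLam_eq_sum (α : ℕ → R) (p : Polynomial R) {D : ℕ} (hD : p.natDegree < D) :
    hankelLam α p = ∑ n ∈ Finset.range D, p.coeff n * α n :=
  Polynomial.sum_over_range' _ (fun n => by simp) D hD

lemma hankelLam_add (α : ℕ → R) (p q : Polynomial R) :
    hankelLam α (p + q) = hankelLam α p + hankelLam α q :=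
  Polynomial.sum_add_index p q _ (fun i => by simp) (fun i b₁ b₂ => by ring)

lemma hankelLam_C_mul (α : ℕ → R) (c : R) (p : Polynomial R) :
    hankelLam α (Polynomial.C c * p) = c * hankelLam α p := by
  rw [hankelLam_eq_sum α _ (lt_of_le_of_lt (Polynomial.natDegree_C_mul_le c p)
    (Nat.lt_succ_self _)), hankelLam_eq_sum α p (Nat.lt_succ_self _), Finset.mul_sum]
  refine Finset.sum_congr rfl fun n _ => ?_
  rw [Polynomial.coeff_C_mul]
  ring

lemma mem_hankelRadical_iff (α : ℕ → R) (f : Polynomial R) :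
    f ∈ hankelRadical α ↔ ∀ m, hankelLam α (f * Polynomial.X ^ m) = 0 := by
  constructor
  · intro hf m; exact hf (Polynomial.X ^ m)
  · intro h g
    show hankelLam α (f * g) = 0
    induction g using Polynomial.induction_on' with
    | add p q hp hq => rw [mul_add, hankelLam_add, hp, hq, add_zero]
    | monomial m c =>
      have h2 : f * Polynomial.monomial m c = Polynomial.C c * (f * Polynomial.X ^ m) := by
        rw [← Polynomial.C_mul_X_pow_eq_monomial]; ring
      rw [h2, hankelLam_C_mul, h m, mul_zero]

lemma hankelLam_reflect (α : ℕ → R) (p : Polynomial R) {D : ℕ} (hD : p.natDegree ≤ D) (m : ℕ) :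
    PowerSeries.coeff (D + m)
        ((p.reflect D : Polynomial R) * PowerSeries.mk α : PowerSeries R)
      = hankelLam α (p * Polynomial.X ^ m) := by
  rw [PowerSeries.coeff_mul, hankelLam_eq_sum α _ (lt_of_le_of_lt (Polynomial.natDegree_mul_le.trans
    (add_le_add hD (Polynomial.natDegree_X_pow_le m))) (Nat.lt_succ_self _))]
  rw [Finset.Nat.sum_antidiagonal_eq_sum_range_succ fun u v =>
    (PowerSeries.coeff u) ((p.reflect D : Polynomial R) : PowerSeries R)
      * (PowerSeries.coeff v) (PowerSeries.mk α)]
  conv_rhs => rw [← Finset.sum_range_reflect]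
  refine Finset.sum_congr rfl fun j hj => ?_
  simp only [Finset.mem_range] at hj
  rw [Polynomial.coeff_coe, Polynomial.coeff_reflect, PowerSeries.coeff_mk]
  have h1 : D + m + 1 - 1 - j = D + m - j := by omega
  rw [h1, Polynomial.coeff_mul_X_pow']
  rcases le_or_gt j D with h | h
  · rw [Polynomial.revAt_le h, if_pos (by omega)]
    congr 2
    omega
  · rw [Polynomial.revAt_eq_self_of_lt h, if_neg (by omega),
      Polynomial.coeff_eq_zero_of_natDegree_lt (by omega), zero_mul]

lemma hankelAux_natDegree_reflect_le (p : Polynomial R) {D : ℕ} (h : p.natDegree ≤ D) :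
    (p.reflect D).natDegree ≤ D := by
  refine Polynomial.natDegree_le_iff_coeff_eq_zero.mpr fun i hi => ?_
  rw [Polynomial.coeff_reflect, Polynomial.revAt_eq_self_of_lt hi,
    Polynomial.coeff_eq_zero_of_natDegree_lt (by omega)]

lemma hankelAux_reflect_reflect (p : Polynomial R) (D : ℕ) :
    (p.reflect D).reflect D = p := by
  refine Polynomial.ext fun i => ?_
  rw [Polynomial.coeff_reflect, Polynomial.coeff_reflect, Polynomial.revAt_invol]

end lam

section master

variable (k : Type*) [Field k] (M N : ℕ)

noncomputable def hankelPP : Polynomial (MvPolynomial (Fin M ⊕ Fin N) k) :=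
  ∏ i : Fin M, (1 - Polynomial.C (MvPolynomial.X (Sum.inl i)) * Polynomial.X)

noncomputable def hankelEE : Polynomial (MvPolynomial (Fin M ⊕ Fin N) k) :=
  ∏ j : Fin N, (1 + Polynomial.C (MvPolynomial.X (Sum.inr j)) * Polynomial.X)

noncomputable def hankelInl : MvPolynomial (Fin M) k →+* MvPolynomial (Fin M ⊕ Fin N) k :=
  (rename (Sum.inl : Fin M → Fin M ⊕ Fin N)).toRingHom

noncomputable def hankelInr : MvPolynomial (Fin N) k →+* MvPolynomial (Fin M ⊕ Fin N) k :=
  (rename (Sum.inr : Fin N → Fin M ⊕ Fin N)).toRingHom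

lemma hankelAux_coe_map_powerSeries {A B : Type*} [CommRing A] [CommRing B] (φ : A →+* B)
    (p : Polynomial A) :
    ((p.map φ : Polynomial B) : PowerSeries B) = PowerSeries.map φ (p : PowerSeries A) := by
  refine PowerSeries.ext fun n => ?_
  simp [Polynomial.coeff_coe, PowerSeries.coeff_map]

lemma hankelAux_mk_hSusy :
    PowerSeries.mk (hSusy k M N) =
      PowerSeries.map (hankelInl k M N) (PowerSeries.mk fun n => hsymm (Fin M) k n)
        * PowerSeries.map (hankelInr k M N) (PowerSeries.mk fun l => esymm (Fin N) k l) := by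
  refine PowerSeries.ext fun n => ?_
  rw [PowerSeries.coeff_mk, PowerSeries.coeff_mul, hSusy]
  rw [Finset.Nat.sum_antidiagonal_eq_sum_range_succ fun u v =>
    (PowerSeries.coeff u)
      (PowerSeries.map (hankelInl k M N) (PowerSeries.mk fun n => hsymm (Fin M) k n))
      * (PowerSeries.coeff v)
        (PowerSeries.map (hankelInr k M N) (PowerSeries.mk fun l => esymm (Fin N) k l))]
  simp only [PowerSeries.coeff_map, PowerSeries.coeff_mk]
  conv_rhs => rw [← Finset.sum_range_reflect]
  have hterm : ∀ l ∈ Finset.range (n + 1),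
      hankelInl k M N (hsymm (Fin M) k (n + 1 - 1 - l))
          * hankelInr k M N (esymm (Fin N) k (n - (n + 1 - 1 - l)))
        = rename Sum.inl (hsymm (Fin M) k (n - l)) * rename Sum.inr (esymm (Fin N) k l) := by
    intro l hl
    have h1 : l ≤ n := by simpa [Nat.lt_succ_iff] using hl
    have h2 : n + 1 - 1 - l = n - l := by omega
    have h3 : n - (n - l) = l := by omega
    rw [h2, h3]
    rfl
  rw [Finset.sum_congr rfl hterm]
  refine Finset.sum_subset (Finset.range_subset_range.mpr (by omega)) ?_
  intro l hl hnot
  have h1 : l ≤ n := by simpa [Nat.lt_succ_iff] using hl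
  have h2 : N < l := by
    simp only [Finset.mem_range] at hnot
    omega
  rw [hankelAux_esymm_zero_of_gt (by simpa using h2)]
  simp

lemma hankelAux_coe_PP_mul :
    ((hankelPP k M N : Polynomial (MvPolynomial (Fin M ⊕ Fin N) k))
        : PowerSeries (MvPolynomial (Fin M ⊕ Fin N) k))
      * PowerSeries.map (hankelInl k M N) (PowerSeries.mk fun n => hsymm (Fin M) k n) = 1 := by
  have h0 : hankelPP k M N
      = Polynomial.map (hankelInl k M N)
        (∏ i : Fin M, (1 - Polynomial.C (MvPolynomial.X i) * Polynomial.X)) := by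
    rw [Polynomial.map_prod, hankelPP]
    refine Finset.prod_congr rfl fun i _ => ?_
    simp only [Polynomial.map_sub, Polynomial.map_one, Polynomial.map_mul, Polynomial.map_C,
      Polynomial.map_X]
    simp [hankelInl, rename_X]
  rw [h0, hankelAux_coe_map_powerSeries, ← map_mul, hankelAux_prod_one_sub_mul_hsymm, map_one]

lemma hankelAux_master :
    ((hankelPP k M N : Polynomial (MvPolynomial (Fin M ⊕ Fin N) k))
        : PowerSeries (MvPolynomial (Fin M ⊕ Fin N) k)) * PowerSeries.mk (hSusy k M N)
      = ((hankelEE k M N : Polynomial (MvPolynomial (Fin M ⊕ Fin N) k))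
        : PowerSeries (MvPolynomial (Fin M ⊕ Fin N) k)) := by
  rw [hankelAux_mk_hSusy, ← mul_assoc, hankelAux_coe_PP_mul, one_mul]
  have h0 : hankelEE k M N
      = Polynomial.map (hankelInr k M N)
        (∏ j : Fin N, (1 + Polynomial.C (MvPolynomial.X j) * Polynomial.X)) := by
    rw [Polynomial.map_prod, hankelEE]
    refine Finset.prod_congr rfl fun j _ => ?_
    simp only [Polynomial.map_add, Polynomial.map_one, Polynomial.map_mul, Polynomial.map_C,
      Polynomial.map_X]
    simp [hankelInr, rename_X]
  rw [h0, hankelAux_coe_map_powerSeries, hankelAux_coe_prod_one_add_X]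

end master
section endgame

variable (k : Type*) [Field k] (M N : ℕ)

local notation "R" => MvPolynomial (Fin M ⊕ Fin N) k

lemma hankelAux_natDegree_PP_le : (hankelPP k M N).natDegree ≤ M := by
  have := hankelAux_natDegree_prod_one_sub_le (univ : Finset (Fin M))
    (fun i => (MvPolynomial.X (Sum.inl i) : R))
  simpa [hankelPP] using this

lemma hankelAux_natDegree_EE_le : (hankelEE k M N).natDegree ≤ N := by
  have := hankelAux_natDegree_prod_one_add_le (univ : Finset (Fin N))
    (fun j => (MvPolynomial.X (Sum.inr j) : R))
  simpa [hankelEE] using this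

lemma hankelAux_coeff_zero_PP : (hankelPP k M N).coeff 0 = 1 := by
  rw [hankelPP, Polynomial.coeff_zero_eq_eval_zero, Polynomial.eval_prod]
  simp

lemma hankelAux_coeff_zero_EE : (hankelEE k M N).coeff 0 = 1 := by
  rw [hankelEE, Polynomial.coeff_zero_eq_eval_zero, Polynomial.eval_prod]
  simp

/-- The monic "characteristic" polynomial of degree `K = max (N+1) M`. -/
noncomputable def hankelCC : Polynomial R := (hankelPP k M N).reflect (max (N + 1) M)

lemma hankelAux_natDegree_PP_le' : (hankelPP k M N).natDegree ≤ max (N + 1) M :=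
  (hankelAux_natDegree_PP_le k M N).trans (le_max_right _ _)

lemma hankelAux_natDegree_CC_le : (hankelCC k M N).natDegree ≤ max (N + 1) M :=
  hankelAux_natDegree_reflect_le _ (hankelAux_natDegree_PP_le' k M N)

lemma hankelAux_coeff_CC : (hankelCC k M N).coeff (max (N + 1) M) = 1 := by
  rw [hankelCC, Polynomial.coeff_reflect, Polynomial.revAt_le le_rfl, Nat.sub_self,
    hankelAux_coeff_zero_PP]

lemma hankelAux_monic_CC : (hankelCC k M N).Monic :=
  Polynomial.monic_of_natDegree_le_of_coeff_eq_one _ (hankelAux_natDegree_CC_le k M N)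
    (hankelAux_coeff_CC k M N)

lemma hankelAux_natDegree_CC : (hankelCC k M N).natDegree = max (N + 1) M :=
  le_antisymm (hankelAux_natDegree_CC_le k M N)
    (Polynomial.le_natDegree_of_ne_zero (by rw [hankelAux_coeff_CC]; exact one_ne_zero))

lemma hankelAux_CC_mem : hankelCC k M N ∈ hankelRadical (hSusy k M N) := by
  rw [mem_hankelRadical_iff]
  intro m
  rw [← hankelLam_reflect _ _ (hankelAux_natDegree_CC_le k M N) m, hankelCC,
    hankelAux_reflect_reflect, hankelAux_master, Polynomial.coeff_coe]
  refine Polynomial.coeff_eq_zero_of_natDegree_lt ?_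
  have h1 := hankelAux_natDegree_EE_le k M N
  have h2 := le_max_left (N + 1) M
  omega

lemma hankelAux_coprime_linear {F : Type*} [Field F] {a b : F} (hab : a + b ≠ 0) :
    IsCoprime (1 - Polynomial.C a * Polynomial.X) (1 + Polynomial.C b * Polynomial.X) := by
  refine ⟨Polynomial.C (a + b)⁻¹ * Polynomial.C b, Polynomial.C (a + b)⁻¹ * Polynomial.C a, ?_⟩
  have h1 : Polynomial.C b * (1 - Polynomial.C a * Polynomial.X)
      + Polynomial.C a * (1 + Polynomial.C b * Polynomial.X) = Polynomial.C (a + b) := by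
    rw [map_add]
    ring
  calc Polynomial.C (a + b)⁻¹ * Polynomial.C b * (1 - Polynomial.C a * Polynomial.X)
        + Polynomial.C (a + b)⁻¹ * Polynomial.C a * (1 + Polynomial.C b * Polynomial.X)
      = Polynomial.C (a + b)⁻¹ * (Polynomial.C b * (1 - Polynomial.C a * Polynomial.X)
        + Polynomial.C a * (1 + Polynomial.C b * Polynomial.X)) := by ring
    _ = 1 := by rw [h1, ← Polynomial.C_mul, inv_mul_cancel₀ hab, Polynomial.C_1]

lemma hankelAux_natDegree_one_sub {F : Type*} [Field F] {a : F} (ha : a ≠ 0) :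
    ((1 : Polynomial F) - Polynomial.C a * Polynomial.X).natDegree = 1 := by
  rw [show (1 : Polynomial F) - Polynomial.C a * Polynomial.X
    = Polynomial.C (-a) * Polynomial.X + Polynomial.C 1 by rw [map_neg, map_one]; ring]
  exact Polynomial.natDegree_linear (neg_ne_zero.mpr ha)

lemma hankelAux_natDegree_one_add {F : Type*} [Field F] {a : F} (ha : a ≠ 0) :
    ((1 : Polynomial F) + Polynomial.C a * Polynomial.X).natDegree = 1 := by
  rw [show (1 : Polynomial F) + Polynomial.C a * Polynomial.X
    = Polynomial.C a * Polynomial.X + Polynomial.C 1 by rw [map_one]; ring]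
  exact Polynomial.natDegree_linear ha

lemma hankelAux_small_mem_eq_zero (f : Polynomial R)
    (hf : f ∈ hankelRadical (hSusy k M N)) (hdeg : f.natDegree < max (N + 1) M) : f = 0 := by
  by_contra hf0
  set K := max (N + 1) M with hK
  have hK1 : 1 ≤ K := le_trans (by omega) (le_max_left (N + 1) M)
  set Kp := K - 1 with hKp
  have hfd : f.natDegree ≤ Kp := by omega
  set fr := f.reflect Kp with hfr
  have hfr0 : fr ≠ 0 := fun h => hf0 (Polynomial.reflect_eq_zero_iff.mp h)
  set B := (fr : PowerSeries R) * PowerSeries.mk (hSusy k M N) with hB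
  have hBc : ∀ n, Kp ≤ n → PowerSeries.coeff n B = 0 := by
    intro n hn
    have h2 : n = Kp + (n - Kp) := by omega
    rw [hB, h2, hankelLam_reflect _ _ hfd]
    exact (mem_hankelRadical_iff _ _).mp hf _
  set Bp := PowerSeries.trunc Kp B with hBp
  have hBpc : (Bp : PowerSeries R) = B := by
    refine PowerSeries.ext fun n => ?_
    rw [Polynomial.coeff_coe, hBp, PowerSeries.coeff_trunc]
    split_ifs with h
    · rfl
    · exact (hBc n (by omega)).symm
  have hkey : fr * hankelEE k M N = hankelPP k M N * Bp := by
    rw [← Polynomial.coe_inj, Polynomial.coe_mul, Polynomial.coe_mul, hBpc, hB,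
      ← hankelAux_master]
    ring
  -- move to the fraction field
  set F := FractionRing R with hF
  have hinj : Function.Injective (algebraMap R F) := IsFractionRing.injective R F
  set φ := Polynomial.mapRingHom (algebraMap R F) with hφ
  have hφa : ∀ p : Polynomial R, φ p = p.map (algebraMap R F) := fun p => rfl
  have hkeyF : φ fr * φ (hankelEE k M N) = φ (hankelPP k M N) * φ Bp := by
    rw [← map_mul, ← map_mul, hkey]
  -- coprimality
  have hne : ∀ (i : Fin M) (j : Fin N),
      algebraMap R F (MvPolynomial.X (Sum.inl i)) + algebraMap R F (MvPolynomial.X (Sum.inr j)) ≠ 0 := by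
    intro i j
    have hadd : algebraMap R F (MvPolynomial.X (Sum.inl i) + MvPolynomial.X (Sum.inr j))
        = algebraMap R F (MvPolynomial.X (Sum.inl i))
          + algebraMap R F (MvPolynomial.X (Sum.inr j)) := RingHom.map_add _ _ _
    rw [← hadd]
    intro h
    have h2 : (MvPolynomial.X (Sum.inl i) + MvPolynomial.X (Sum.inr j) : R) = 0 := by
      apply hinj
      rw [h, map_zero]
    have h3 := congrArg (MvPolynomial.coeff (Finsupp.single (Sum.inl i) 1)) h2
    rw [MvPolynomial.coeff_add, MvPolynomial.coeff_zero, MvPolynomial.coeff_X,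
      MvPolynomial.coeff_X'] at h3
    rw [if_pos rfl, if_neg (by
      intro hs
      have := Finsupp.single_left_injective (α := Fin M ⊕ Fin N) (one_ne_zero (α := ℕ)) hs
      exact Sum.inr_ne_inl this)] at h3
    simp at h3
  have hPPmap : φ (hankelPP k M N)
      = ∏ i : Fin M, (1 - Polynomial.C (algebraMap R F (MvPolynomial.X (Sum.inl i))) * Polynomial.X) := by
    rw [hφa, hankelPP, Polynomial.map_prod]
    refine Finset.prod_congr rfl fun i _ => ?_
    simp
  have hEEmap : φ (hankelEE k M N)
      = ∏ j : Fin N, (1 + Polynomial.C (algebraMap R F (MvPolynomial.X (Sum.inr j))) * Polynomial.X) := by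
    rw [hφa, hankelEE, Polynomial.map_prod]
    refine Finset.prod_congr rfl fun j _ => ?_
    simp
  have hcop : IsCoprime (φ (hankelPP k M N)) (φ (hankelEE k M N)) := by
    rw [hPPmap, hEEmap]
    refine IsCoprime.prod_left fun i _ => IsCoprime.prod_right fun j _ => ?_
    exact hankelAux_coprime_linear (hne i j)
  have hdvd : φ (hankelPP k M N) ∣ φ fr :=
    hcop.dvd_of_dvd_mul_right ⟨φ Bp, hkeyF⟩
  obtain ⟨w, hw⟩ := hdvd
  have hXne : ∀ s : Fin M ⊕ Fin N, algebraMap R F (MvPolynomial.X s) ≠ 0 := by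
    intro s h
    exact MvPolynomial.X_ne_zero s (hinj (by rw [h, map_zero]))
  have hPP0 : φ (hankelPP k M N) ≠ 0 := by
    intro h
    have h2 := congrArg (fun p => Polynomial.coeff p 0) h
    simp only [hφa, Polynomial.coeff_map, hankelAux_coeff_zero_PP, map_one,
      Polynomial.coeff_zero] at h2
    exact one_ne_zero h2
  have hEE0 : φ (hankelEE k M N) ≠ 0 := by
    intro h
    have h2 := congrArg (fun p => Polynomial.coeff p 0) h
    simp only [hφa, Polynomial.coeff_map, hankelAux_coeff_zero_EE, map_one,
      Polynomial.coeff_zero] at h2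
    exact one_ne_zero h2
  have hfrF : φ fr ≠ 0 := by
    rw [hφa]
    exact (Polynomial.map_ne_zero_iff hinj).mpr hfr0
  have hw0 : w ≠ 0 := by
    rintro rfl
    rw [mul_zero] at hw
    exact hfrF hw
  have hdegPPF : (φ (hankelPP k M N)).natDegree = M := by
    rw [hPPmap, Polynomial.natDegree_prod _ _ (fun i _ => ?_)]
    · rw [Finset.sum_congr rfl fun i _ => hankelAux_natDegree_one_sub (hXne (Sum.inl i))]
      simp
    · intro h
      have := congrArg (fun p => Polynomial.coeff p 0) h
      simp at this
  have hdegEEF : (φ (hankelEE k M N)).natDegree = N := by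
    rw [hEEmap, Polynomial.natDegree_prod _ _ (fun j _ => ?_)]
    · rw [Finset.sum_congr rfl fun j _ => hankelAux_natDegree_one_add (hXne (Sum.inr j))]
      simp
    · intro h
      have := congrArg (fun p => Polynomial.coeff p 0) h
      simp at this
  have h1 : M + w.natDegree ≤ Kp := by
    have hb : (φ fr).natDegree ≤ Kp := by
      rw [hφa]
      exact Polynomial.natDegree_map_le.trans (hankelAux_natDegree_reflect_le _ hfd)
    rw [hw, Polynomial.natDegree_mul hPP0 hw0, hdegPPF] at hb
    exact hb
  have hcancel : w * φ (hankelEE k M N) = φ Bp := by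
    apply mul_left_cancel₀ hPP0
    rw [← mul_assoc, ← hw, hkeyF]
  have hBpF0 : φ Bp ≠ 0 := by
    rw [← hcancel]
    exact mul_ne_zero hw0 hEE0
  have hBpne : Bp ≠ 0 := by
    rintro h
    rw [h, map_zero] at hBpF0
    exact hBpF0 rfl
  have hKp0 : Kp ≠ 0 := by
    intro h
    apply hBpne
    rw [hBp, h]
    refine Polynomial.ext fun n => ?_
    rw [PowerSeries.coeff_trunc]
    simp
  have hBpdeg : Bp.natDegree < Kp := by
    rw [Polynomial.natDegree_lt_iff_degree_lt hBpne]
    exact_mod_cast PowerSeries.degree_trunc_lt B Kp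
  have h2 : w.natDegree + N < Kp := by
    have hc := congrArg Polynomial.natDegree hcancel
    rw [Polynomial.natDegree_mul hw0 hEE0, hdegEEF] at hc
    have hb : (φ Bp).natDegree ≤ Bp.natDegree := by
      rw [hφa]; exact Polynomial.natDegree_map_le
    omega
  have hA := le_max_left (N + 1) M
  have hBm := le_max_right (N + 1) M
  omega

end endgame
set_option maxHeartbeats 1000000 in
set_option synthInstance.maxHeartbeats 200000 in
theorem hankel_quotient_free_of_hSusy
    (k : Type*) [Field k] (M N : ℕ) (hM : 1 ≤ M) :
    ∃ b : Module.Basis (Fin (max (N + 1) M)) (MvPolynomial (Fin M ⊕ Fin N) k)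
        (Polynomial (MvPolynomial (Fin M ⊕ Fin N) k) ⧸ hankelRadical (hSusy k M N)),
      ∀ i : Fin (max (N + 1) M),
        b i = Ideal.Quotient.mk (hankelRadical (hSusy k M N)) (Polynomial.X ^ (i : ℕ)) := by
  classical
  set I := hankelRadical (hSusy k M N) with hI
  set v : Fin (max (N + 1) M) →
      (Polynomial (MvPolynomial (Fin M ⊕ Fin N) k) ⧸ I) :=
    fun i => Ideal.Quotient.mk I (Polynomial.X ^ (i : ℕ)) with hv
  have hK0 : 0 < max (N + 1) M := lt_of_lt_of_le (Nat.succ_pos N) (le_max_left _ _)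
  have hsmul : ∀ (r : MvPolynomial (Fin M ⊕ Fin N) k)
      (p : Polynomial (MvPolynomial (Fin M ⊕ Fin N) k)),
      r • Ideal.Quotient.mk I p = Ideal.Quotient.mk I (Polynomial.C r * p) := by
    intro r p
    have h1 : Ideal.Quotient.mk I (r • p) = r • Ideal.Quotient.mk I p := by
      rw [← Ideal.Quotient.mkₐ_eq_mk (MvPolynomial (Fin M ⊕ Fin N) k)]
      exact map_smul (Ideal.Quotient.mkₐ (MvPolynomial (Fin M ⊕ Fin N) k) I) r p
    rw [← h1, Polynomial.smul_eq_C_mul]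
  have hli : LinearIndependent (MvPolynomial (Fin M ⊕ Fin N) k) v := by
    rw [Fintype.linearIndependent_iff]
    intro g hg
    set f : Polynomial (MvPolynomial (Fin M ⊕ Fin N) k) :=
      ∑ i : Fin (max (N + 1) M), Polynomial.C (g i) * Polynomial.X ^ (i : ℕ) with hf
    have hfI : f ∈ I := by
      rw [← Ideal.Quotient.eq_zero_iff_mem, hf, map_sum]
      refine Eq.trans (Finset.sum_congr rfl fun i _ => ?_) hg
      exact (hsmul (g i) (Polynomial.X ^ (i : ℕ))).symm
    have hdeg : f.natDegree < max (N + 1) M := by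
      have h1 : f.natDegree ≤ max (N + 1) M - 1 := by
        refine (Polynomial.natDegree_sum_le _ _).trans ?_
        rw [Finset.fold_max_le]
        refine ⟨Nat.zero_le _, fun i _ => ?_⟩
        refine le_trans ?_ (show (i : ℕ) ≤ max (N + 1) M - 1 by omega)
        simp only [Function.comp_apply]
        exact (Polynomial.natDegree_C_mul_le _ _).trans (Polynomial.natDegree_X_pow_le _)
      omega
    have hf0 : f = 0 := hankelAux_small_mem_eq_zero k M N f hfI hdeg
    intro i
    have h2 := congrArg (fun p => Polynomial.coeff p (i : ℕ)) hf0
    simp only [hf, Polynomial.finset_sum_coeff, Polynomial.coeff_C_mul,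
      Polynomial.coeff_X_pow, Polynomial.coeff_zero] at h2
    rwa [Finset.sum_eq_single i
      (fun j _ hj => by
        rw [if_neg (fun hc => hj (Fin.ext hc.symm)), mul_zero])
      (fun h => absurd (Finset.mem_univ i) h), if_pos rfl, mul_one] at h2
  have hsp : ⊤ ≤ Submodule.span (MvPolynomial (Fin M ⊕ Fin N) k) (Set.range v) := by
    rintro x -
    obtain ⟨p, rfl⟩ := Ideal.Quotient.mk_surjective x
    have hmod : Ideal.Quotient.mk I p = Ideal.Quotient.mk I (p %ₘ hankelCC k M N) := by
      rw [Ideal.Quotient.mk_eq_mk_iff_sub_mem]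
      have h2 : p - p %ₘ hankelCC k M N = hankelCC k M N * (p /ₘ hankelCC k M N) := by
        have h3 := Polynomial.modByMonic_add_div p (hankelCC k M N)
        exact sub_eq_iff_eq_add.mpr (h3.symm.trans (add_comm _ _))
      rw [h2]
      exact Ideal.mul_mem_right _ _ (hankelAux_CC_mem k M N)
    rw [hmod]
    set r := p %ₘ hankelCC k M N with hr
    have hrdeg : r.natDegree < max (N + 1) M := by
      have h3 : r.degree < (hankelCC k M N).degree :=
        Polynomial.degree_modByMonic_lt p (hankelAux_monic_CC k M N)
      have h4 : (hankelCC k M N).degree = ((max (N + 1) M : ℕ) : WithBot ℕ) := by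
        rw [Polynomial.degree_eq_natDegree (hankelAux_monic_CC k M N).ne_zero,
          hankelAux_natDegree_CC]
      rcases eq_or_ne r 0 with h | h
      · rw [h]
        simpa using hK0
      · rw [Polynomial.natDegree_lt_iff_degree_lt h]
        rw [h4] at h3
        exact h3
    have hrep : Ideal.Quotient.mk I r
        = ∑ i : Fin (max (N + 1) M), (r.coeff (i : ℕ)) • v i := by
      conv_lhs => rw [Polynomial.as_sum_range' r _ hrdeg]
      rw [map_sum, ← Fin.sum_univ_eq_sum_range
        (fun i => Ideal.Quotient.mk I (Polynomial.monomial i (r.coeff i)))]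
      refine Finset.sum_congr rfl fun i _ => ?_
      rw [hsmul, Polynomial.C_mul_X_pow_eq_monomial]
    rw [hrep]
    exact Submodule.sum_mem _ fun i _ =>
      Submodule.smul_mem _ _ (Submodule.subset_span ⟨i, rfl⟩)
  exact ⟨Module.Basis.mk hli hsp, fun i => Module.Basis.mk_apply hli hsp i⟩
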